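/- Abundant-resource case: if F_max ≥ ∑_{n=1}^{N} F_n/(∑_{m=n+1}^{N+1} Δt_m), then the allocation f_{n,m} = F_n/(∑_{m'=n+1}^{N+1} Δt_{m'}) for all m ∈ {n+1,…,N+1} is feasible (it satisfies the per-slot capacity and completion constraints) and achieves energy ∑_{n=1}^{N} κ·F_n³/(∑_{m=n+1}^{N+1} Δt_m)², which is the global minimum of the energy over all feasible allocations. -/

import Mathlib

open Finset in
/-- Feasibility of a frequency allocation for the asynchronous MEC problem. -/
def FeasibleAlloc (N : ℕ) (Fmax : ℝ) (F Δt : ℕ → ℝ) (f : ℕ → ℕ → ℝ) : Prop :=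
  (∀ n ∈ Icc 1 N, ∀ m ∈ Icc (n + 1) (N + 1), 0 ≤ f n m) ∧
  (∀ m ∈ Icc 2 (N + 1), ∑ n ∈ Icc 1 (m - 1), f n m ≤ Fmax) ∧
  (∀ n ∈ Icc 1 N, F n ≤ ∑ m ∈ Icc (n + 1) (N + 1), f n m * Δt m)

open Finset in
/-- Total server energy of an allocation. -/
def allocEnergy (N : ℕ) (κ : ℝ) (Δt : ℕ → ℝ) (f : ℕ → ℕ → ℝ) : ℝ :=
  ∑ n ∈ Icc 1 N, ∑ m ∈ Icc (n + 1) (N + 1), κ * f n m ^ 3 * Δt m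

/-- Abundant-resource case: if F_max ≥ ∑_n F_n/(∑_{m>n} Δt_m), the constant
allocation f_{n,m} = F_n/(∑_{m'=n+1}^{N+1} Δt_{m'}) is feasible, its energy is
∑_n κ·F_n³/(∑ Δt)², and it is globally optimal. -/
theorem stmt_12 (N : ℕ) (hN : 1 ≤ N) (κ Fmax : ℝ) (hκ : 0 < κ) (F Δt : ℕ → ℝ)
    (hF : ∀ n ∈ Finset.Icc 1 N, 0 < F n)
    (hΔt : ∀ m ∈ Finset.Icc 2 (N + 1), 0 < Δt m)
    (habund : ∑ n ∈ Finset.Icc 1 N,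
        F n / (∑ m ∈ Finset.Icc (n + 1) (N + 1), Δt m) ≤ Fmax) :
    FeasibleAlloc N Fmax F Δt
      (fun n _ => F n / (∑ m ∈ Finset.Icc (n + 1) (N + 1), Δt m)) ∧
    allocEnergy N κ Δt
        (fun n _ => F n / (∑ m ∈ Finset.Icc (n + 1) (N + 1), Δt m)) =
      ∑ n ∈ Finset.Icc 1 N,
        κ * F n ^ 3 / (∑ m ∈ Finset.Icc (n + 1) (N + 1), Δt m) ^ 2 ∧
    ∀ f : ℕ → ℕ → ℝ, FeasibleAlloc N Fmax F Δt f →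
      allocEnergy N κ Δt
          (fun n _ => F n / (∑ m ∈ Finset.Icc (n + 1) (N + 1), Δt m)) ≤
        allocEnergy N κ Δt f := by
  have hS : ∀ n ∈ Finset.Icc 1 N, 0 < ∑ m ∈ Finset.Icc (n + 1) (N + 1), Δt m := by
    intro n hn
    simp only [Finset.mem_Icc] at hn
    apply Finset.sum_pos
    · intro m hm
      simp only [Finset.mem_Icc] at hm
      exact hΔt m (Finset.mem_Icc.mpr ⟨by omega, hm.2⟩)
    · exact ⟨n + 1, Finset.mem_Icc.mpr ⟨le_rfl, by omega⟩⟩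
  have hfeas : FeasibleAlloc N Fmax F Δt
      (fun n _ => F n / (∑ m ∈ Finset.Icc (n + 1) (N + 1), Δt m)) := by
    refine ⟨fun n hn m _ => div_nonneg (hF n hn).le (hS n hn).le, ?_, ?_⟩
    · intro m hm
      simp only [Finset.mem_Icc] at hm
      calc ∑ n ∈ Finset.Icc 1 (m - 1),
              F n / (∑ k ∈ Finset.Icc (n + 1) (N + 1), Δt k)
          ≤ ∑ n ∈ Finset.Icc 1 N,
              F n / (∑ k ∈ Finset.Icc (n + 1) (N + 1), Δt k) :=
            Finset.sum_le_sum_of_subset_of_nonneg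
              (Finset.Icc_subset_Icc_right (by omega))
              (fun n hn _ => div_nonneg (hF n hn).le (hS n hn).le)
        _ ≤ Fmax := habund
    · intro n hn
      simp only
      rw [← Finset.mul_sum, div_mul_cancel₀ _ (hS n hn).ne']
  have heq : allocEnergy N κ Δt
      (fun n _ => F n / (∑ m ∈ Finset.Icc (n + 1) (N + 1), Δt m)) =
      ∑ n ∈ Finset.Icc 1 N,
        κ * F n ^ 3 / (∑ m ∈ Finset.Icc (n + 1) (N + 1), Δt m) ^ 2 := by
    unfold allocEnergy
    refine Finset.sum_congr rfl fun n hn => ?_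
    rw [← Finset.mul_sum]
    have h := (hS n hn).ne'
    field_simp
  refine ⟨hfeas, heq, ?_⟩
  intro f ⟨hf0, _, hcomp⟩
  rw [heq]
  unfold allocEnergy
  refine Finset.sum_le_sum fun n hn => ?_
  set S := ∑ m ∈ Finset.Icc (n + 1) (N + 1), Δt m with hSdef
  have hSpos := hS n hn
  have hΔ : ∀ m ∈ Finset.Icc (n + 1) (N + 1), 0 < Δt m := by
    intro m hm
    simp only [Finset.mem_Icc] at hm hn
    exact hΔt m (Finset.mem_Icc.mpr ⟨by omega, hm.2⟩)
  have hjensen := (convexOn_pow 3).map_sum_le (t := Finset.Icc (n + 1) (N + 1))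
    (w := fun m => Δt m / S) (p := fun m => f n m)
    (fun m hm => div_nonneg (hΔ m hm).le hSpos.le)
    (by rw [← Finset.sum_div, div_self hSpos.ne'])
    (fun m hm => hf0 n hn m hm)
  simp only [smul_eq_mul] at hjensen
  have havg : (∑ m ∈ Finset.Icc (n + 1) (N + 1), (Δt m / S) * f n m) =
      (∑ m ∈ Finset.Icc (n + 1) (N + 1), f n m * Δt m) / S := by
    rw [Finset.sum_div]
    exact Finset.sum_congr rfl fun m _ => by ring
  rw [havg] at hjensen
  have hcube : (F n / S) ^ 3 ≤
      ((∑ m ∈ Finset.Icc (n + 1) (N + 1), f n m * Δt m) / S) ^ 3 := by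
    gcongr
    · exact div_nonneg (hF n hn).le hSpos.le
    · exact hcomp n hn
  calc κ * F n ^ 3 / S ^ 2 = κ * S * (F n / S) ^ 3 := by
        field_simp
    _ ≤ κ * S * ((∑ m ∈ Finset.Icc (n + 1) (N + 1), f n m * Δt m) / S) ^ 3 := by
        have := mul_pos hκ hSpos
        exact mul_le_mul_of_nonneg_left hcube this.le
    _ ≤ κ * S * ∑ m ∈ Finset.Icc (n + 1) (N + 1), (Δt m / S) * f n m ^ 3 := by
        have := mul_pos hκ hSpos
        exact mul_le_mul_of_nonneg_left hjensen this.le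
    _ = ∑ m ∈ Finset.Icc (n + 1) (N + 1), κ * f n m ^ 3 * Δt m := by
        rw [Finset.mul_sum]
        refine Finset.sum_congr rfl fun m _ => ?_
        field_simp
        rw [mul_assoc S, mul_comm S, mul_div_cancel_right₀ _ (show S ≠ 0 from hSpos.ne')]
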